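/- Let q : ℤ → ℝ be a finitely supported sequence with non-negative entries (q_i ≥ 0 for all i) whose symbol satisfies q(1) = 1, and for an integer L ≥ 1 let q^{[L]} : ℤ → ℝ be the coefficient sequence of q^{[L]}(z) = q(z)·q(z²)⋯q(z^{2^{L−1}}). Then for every L ≥ 1, max{ ∑_{j∈ℤ} |q^{[L]}_{2j}| , ∑_{j∈ℤ} |q^{[L]}_{2j+1}| } = max{ S_e , S_o }, where S_e = ∑_j q_{2j} and S_o = ∑_j q_{2j+1}. -/

import Mathlib

open Filter Topology

/-- The subdivision operator with mask `a`: `(S_a f)_i = ∑_{j ∈ ℤ} a_{i-2j} f_j`. -/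
noncomputable def subdiv (a f : ℤ → ℝ) : ℤ → ℝ := fun i => ∑ᶠ j : ℤ, a (i - 2 * j) * f j

/-- A sequence `f : ℤ → ℝ` is bounded. -/
def Bdd (f : ℤ → ℝ) : Prop := ∃ C : ℝ, ∀ i : ℤ, |f i| ≤ C

/-- The forward difference operator `(Δf)_i = f_{i+1} - f_i`. -/
def Δseq (f : ℤ → ℝ) : ℤ → ℝ := fun i => f (i + 1) - f i

/-- Coefficients of the iterated symbol `q^{[L]}(z) = q(z) q(z²) ⋯ q(z^{2^{L-1}})`,
defined via `q^{[0]}(z) = 1` and `q^{[L+1]}(z) = q(z) · q^{[L]}(z²)`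
(so the coefficient recursion is `q^{[L+1]}_i = ∑_j q_{i-2j} q^{[L]}_j`). -/
noncomputable def iterCoeff (q : ℤ → ℝ) : ℕ → ℤ → ℝ
  | 0 => fun i => if i = 0 then 1 else 0
  | L + 1 => fun i => ∑ᶠ j : ℤ, q (i - 2 * j) * iterCoeff q L j

section Aux

variable {q : ℤ → ℝ}

lemma supp_comp_fin (hfin : (Function.support q).Finite) (g : ℤ → ℤ)
    (hg : Function.Injective g) : (Function.support fun j => q (g j)).Finite := by
  have : (Function.support fun j => q (g j)) = g ⁻¹' Function.support q := by
    ext j; simp [Function.support]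
  rw [this]
  exact hfin.preimage (hg.injOn)

lemma iter_supp_fin (hfin : (Function.support q).Finite) :
    ∀ L, (Function.support (iterCoeff q L)).Finite
  | 0 => by
    apply Set.Finite.subset (Set.finite_singleton (0 : ℤ))
    intro i hi
    simp only [Function.mem_support, iterCoeff] at hi
    by_contra h
    exact hi (if_neg (by simpa using h))
  | (L + 1) => by
    apply Set.Finite.subset
      (Set.Finite.image (fun p : ℤ × ℤ => p.1 + 2 * p.2)
        (hfin.prod (iter_supp_fin hfin L)))
    intro i hi
    simp only [Function.mem_support, iterCoeff] at hi
    by_contra h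
    apply hi
    apply finsum_eq_zero_of_forall_eq_zero
    intro j
    by_contra hj
    have h1 : q (i - 2 * j) ≠ 0 := fun hz => hj (by rw [hz, zero_mul])
    have h2 : iterCoeff q L j ≠ 0 := fun hz => hj (by rw [hz, mul_zero])
    exact h ⟨(i - 2 * j, j), ⟨h1, h2⟩, by ring⟩

lemma iter_nonneg (hnn : ∀ i : ℤ, 0 ≤ q i) : ∀ L i, 0 ≤ iterCoeff q L i
  | 0, i => by simp only [iterCoeff]; split <;> norm_num
  | (L + 1), i => by
    refine finsum_nonneg fun j => mul_nonneg (hnn _) (iter_nonneg hnn L j)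

lemma iter_succ_eq_sum (hfin : (Function.support q).Finite) (L : ℕ) (i : ℤ) :
    iterCoeff q (L + 1) i
      = ∑ b ∈ (iter_supp_fin hfin L).toFinset, q (i - 2 * b) * iterCoeff q L b := by
  show (∑ᶠ j : ℤ, q (i - 2 * j) * iterCoeff q L j) = _
  apply finsum_eq_sum_of_support_subset
  intro b hb
  simp only [Function.mem_support] at hb
  have : iterCoeff q L b ≠ 0 := fun hz => hb (by rw [hz, mul_zero])
  simpa using this

lemma total_succ (hfin : (Function.support q).Finite) (L : ℕ) :
    ∑ᶠ i : ℤ, iterCoeff q (L + 1) i = (∑ᶠ i : ℤ, q i) * ∑ᶠ i : ℤ, iterCoeff q L i := by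
  set B := (iter_supp_fin hfin L).toFinset with hB
  calc ∑ᶠ i : ℤ, iterCoeff q (L + 1) i
      = ∑ᶠ i : ℤ, ∑ b ∈ B, q (i - 2 * b) * iterCoeff q L b := by
        exact finsum_congr fun i => iter_succ_eq_sum hfin L i
    _ = ∑ b ∈ B, ∑ᶠ i : ℤ, q (i - 2 * b) * iterCoeff q L b := by
        apply finsum_sum_comm
        intro b _
        apply Set.Finite.subset (supp_comp_fin hfin (fun i => i - 2 * b)
          (fun x y h => by first | omega | (dsimp at h; omega)))
        intro i hi
        simp only [Function.mem_support] at hi ⊢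
        exact fun hz => hi (by rw [hz, zero_mul])
    _ = ∑ b ∈ B, (∑ᶠ i : ℤ, q (i - 2 * b)) * iterCoeff q L b := by
        refine Finset.sum_congr rfl fun b _ => ?_
        exact (finsum_mul (fun i => q (i - 2 * b)) (iterCoeff q L b)).symm
    _ = ∑ b ∈ B, (∑ᶠ i : ℤ, q i) * iterCoeff q L b := by
        refine Finset.sum_congr rfl fun b _ => ?_
        congr 1
        rw [← finsum_comp_equiv (Equiv.addRight (2 * b)) (f := fun i => q (i - 2 * b))]
        exact finsum_congr fun i => by simp
    _ = (∑ᶠ i : ℤ, q i) * ∑ b ∈ B, iterCoeff q L b := by rw [Finset.mul_sum]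
    _ = (∑ᶠ i : ℤ, q i) * ∑ᶠ i : ℤ, iterCoeff q L i := by
        congr 1
        symm
        apply finsum_eq_sum_of_support_subset
        intro b hb
        simpa [hB] using hb

lemma slice_succ (hfin : (Function.support q).Finite) (L : ℕ) (r : ℤ) :
    ∑ᶠ j : ℤ, iterCoeff q (L + 1) (2 * j + r)
      = (∑ᶠ j : ℤ, q (2 * j + r)) * ∑ᶠ i : ℤ, iterCoeff q L i := by
  set B := (iter_supp_fin hfin L).toFinset with hB
  calc ∑ᶠ j : ℤ, iterCoeff q (L + 1) (2 * j + r)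
      = ∑ᶠ j : ℤ, ∑ b ∈ B, q (2 * j + r - 2 * b) * iterCoeff q L b := by
        exact finsum_congr fun j => iter_succ_eq_sum hfin L (2 * j + r)
    _ = ∑ b ∈ B, ∑ᶠ j : ℤ, q (2 * j + r - 2 * b) * iterCoeff q L b := by
        apply finsum_sum_comm
        intro b _
        apply Set.Finite.subset (supp_comp_fin hfin (fun j => 2 * j + r - 2 * b)
          (fun x y h => by first | omega | (dsimp at h; omega)))
        intro j hj
        simp only [Function.mem_support] at hj ⊢
        exact fun hz => hj (by rw [hz, zero_mul])
    _ = ∑ b ∈ B, (∑ᶠ j : ℤ, q (2 * j + r - 2 * b)) * iterCoeff q L b := by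
        refine Finset.sum_congr rfl fun b _ => ?_
        exact (finsum_mul (fun j => q (2 * j + r - 2 * b)) (iterCoeff q L b)).symm
    _ = ∑ b ∈ B, (∑ᶠ j : ℤ, q (2 * j + r)) * iterCoeff q L b := by
        refine Finset.sum_congr rfl fun b _ => ?_
        congr 1
        rw [← finsum_comp_equiv (Equiv.addRight b) (f := fun j => q (2 * j + r - 2 * b))]
        exact finsum_congr fun j => congrArg q (by simp; ring)
    _ = (∑ᶠ j : ℤ, q (2 * j + r)) * ∑ b ∈ B, iterCoeff q L b := by rw [Finset.mul_sum]
    _ = (∑ᶠ j : ℤ, q (2 * j + r)) * ∑ᶠ i : ℤ, iterCoeff q L i := by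
        congr 1
        symm
        apply finsum_eq_sum_of_support_subset
        intro b hb
        simpa [hB] using hb

lemma iter_total (hfin : (Function.support q).Finite) (hsum : ∑ᶠ i : ℤ, q i = 1) :
    ∀ L, ∑ᶠ i : ℤ, iterCoeff q L i = 1
  | 0 => by
    rw [finsum_eq_single (iterCoeff q 0) 0 (fun x hx => by simp [iterCoeff, hx])]
    simp [iterCoeff]
  | (L + 1) => by
    rw [total_succ hfin L, hsum, iter_total hfin hsum L, one_mul]

end Aux

/-- If `q` is finitely supported with non-negative entries and `q(1) = 1`,
then for every `L ≥ 1`,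
`max { ∑_j |q^{[L]}_{2j}|, ∑_j |q^{[L]}_{2j+1}| } = max { S_e, S_o }`,
where `S_e = ∑_j q_{2j}` and `S_o = ∑_j q_{2j+1}`. -/
theorem iter_norm_eq_max_even_odd_of_nonneg (q : ℤ → ℝ)
    (hfin : (Function.support q).Finite) (hnn : ∀ i : ℤ, 0 ≤ q i)
    (hsum : ∑ᶠ i : ℤ, q i = 1) (L : ℕ) (hL : 1 ≤ L) :
    max (∑ᶠ j : ℤ, |iterCoeff q L (2 * j)|) (∑ᶠ j : ℤ, |iterCoeff q L (2 * j + 1)|) =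
      max (∑ᶠ j : ℤ, q (2 * j)) (∑ᶠ j : ℤ, q (2 * j + 1)) := by
  obtain ⟨n, rfl⟩ : ∃ n, L = n + 1 := ⟨L - 1, by omega⟩
  have habs : ∀ i : ℤ, |iterCoeff q (n + 1) i| = iterCoeff q (n + 1) i :=
    fun i => abs_of_nonneg (iter_nonneg hnn _ i)
  have heven : ∑ᶠ j : ℤ, |iterCoeff q (n + 1) (2 * j)| = ∑ᶠ j : ℤ, q (2 * j) := by
    calc ∑ᶠ j : ℤ, |iterCoeff q (n + 1) (2 * j)|
        = ∑ᶠ j : ℤ, iterCoeff q (n + 1) (2 * j + 0) := by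
          exact finsum_congr fun j => by rw [habs, add_zero]
      _ = (∑ᶠ j : ℤ, q (2 * j + 0)) * ∑ᶠ i : ℤ, iterCoeff q n i := slice_succ hfin n 0
      _ = ∑ᶠ j : ℤ, q (2 * j) := by
          rw [iter_total hfin hsum n, mul_one]
          exact finsum_congr fun j => by rw [add_zero]
  have hodd : ∑ᶠ j : ℤ, |iterCoeff q (n + 1) (2 * j + 1)| = ∑ᶠ j : ℤ, q (2 * j + 1) := by
    calc ∑ᶠ j : ℤ, |iterCoeff q (n + 1) (2 * j + 1)|
        = ∑ᶠ j : ℤ, iterCoeff q (n + 1) (2 * j + 1) := finsum_congr fun j => habs _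
      _ = (∑ᶠ j : ℤ, q (2 * j + 1)) * ∑ᶠ i : ℤ, iterCoeff q n i := slice_succ hfin n 1
      _ = ∑ᶠ j : ℤ, q (2 * j + 1) := by rw [iter_total hfin hsum n, mul_one]
  rw [heven, hodd]
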